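/- Let H > 1/2 and let Y(t) = ∫₀ᵗ s^{1/2−H} X(s) ds for a continuous X : [0,T] → ℝ with ‖X‖_{∞,T} = sup|X|. Then ∫₀ᵗ (t−s)^{1/2−H} s^{1/2−H} X(s) ds = t^{1/2−H} Y(t) + (H−1/2) ∫₀ᵗ (Y(t) − Y(t−s)) s^{−1/2−H} ds for every t ∈ (0,T]. -/

import Mathlib

open MeasureTheory intervalIntegral Set Filter Topology

lemma ii_of_bound {f g : ℝ → ℝ} {a b : ℝ} (hab : a ≤ b)
    (hf : ContinuousOn f (Set.Ioo a b))
    (hg : IntervalIntegrable g volume a b)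
    (hbound : ∀ x ∈ Set.Ioo a b, |f x| ≤ g x) :
    IntervalIntegrable f volume a b := by
  rw [intervalIntegrable_iff_integrableOn_Ioo_of_le hab] at hg ⊢
  refine hg.mono' (hf.aestronglyMeasurable measurableSet_Ioo) ?_
  filter_upwards [MeasureTheory.ae_restrict_mem measurableSet_Ioo] with x hx
  simpa [Real.norm_eq_abs] using hbound x hx

lemma rpow_sub_le_sub_rpow {a b p : ℝ} (h0 : 0 ≤ a) (hab : a ≤ b) (hp0 : 0 ≤ p) (hp1 : p ≤ 1) :
    b ^ p - a ^ p ≤ (b - a) ^ p := by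
  have key := NNReal.rpow_add_le_add_rpow (Real.toNNReal (b - a)) (Real.toNNReal a) hp0 hp1
  have hba : (0:ℝ) ≤ b - a := sub_nonneg.2 hab
  have h1 : Real.toNNReal (b - a) + Real.toNNReal a = Real.toNNReal b := by
    rw [← Real.toNNReal_add hba h0, sub_add_cancel]
  rw [h1] at key
  have := (NNReal.coe_le_coe).2 key
  push_cast [NNReal.coe_rpow] at this
  rw [Real.coe_toNNReal _ (le_trans h0 hab), Real.coe_toNNReal _ hba, Real.coe_toNNReal _ h0]
    at this
  linarith

theorem stmt10 (H T : ℝ) (hH : 1 / 2 < H) (hH1 : H < 1) (hT : 0 < T)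
    (X : ℝ → ℝ) (hXc : ContinuousOn X (Set.Icc 0 T))
    (Y : ℝ → ℝ) (hY : ∀ t ∈ Set.Icc (0:ℝ) T, Y t = ∫ s in (0:ℝ)..t, s ^ (1 / 2 - H) * X s) :
    ∀ t ∈ Set.Ioc (0:ℝ) T,
      ∫ s in (0:ℝ)..t, (t - s) ^ (1 / 2 - H) * s ^ (1 / 2 - H) * X s =
        t ^ (1 / 2 - H) * Y t +
          (H - 1 / 2) * ∫ s in (0:ℝ)..t, (Y t - Y (t - s)) * s ^ (-(1 / 2) - H) := by
  intro t ht
  obtain ⟨ht0, htT⟩ := ht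
  set α : ℝ := 1 / 2 - H with hα
  have hα0 : α < 0 := by rw [hα]; linarith
  have hα1 : (-1 : ℝ) < α := by rw [hα]; linarith
  have hp0 : (0:ℝ) < α + 1 := by linarith
  have hne : H - 1/2 ≠ 0 := by intro h; apply absurd hH; linarith [sub_eq_zero.1 h]
  set c : ℝ := (H - 1/2)⁻¹ with hc
  have hcm : (H - 1/2) * c = 1 := mul_inv_cancel₀ hne
  -- bound on X
  obtain ⟨M, hM⟩ := IsCompact.exists_bound_of_continuousOn isCompact_Icc hXc
  set M0 : ℝ := max M 0 with hM0
  have hM0n : 0 ≤ M0 := le_max_right _ _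
  have hMX : ∀ s ∈ Set.Icc (0:ℝ) T, |X s| ≤ M0 := fun s hs =>
    le_trans (by simpa [Real.norm_eq_abs] using hM s hs) (le_max_left _ _)
  -- integrability of s^α * X s on subintervals of [0, T]
  have hXI : ∀ a b : ℝ, 0 ≤ a → a ≤ b → b ≤ T →
      IntervalIntegrable (fun s => s ^ α * X s) volume a b := by
    intro a b ha hab hbT
    refine ii_of_bound hab ?_
      ((intervalIntegrable_rpow' (a := a) (b := b) hα1).const_mul M0) ?_
    · refine ContinuousOn.mul (ContinuousOn.rpow_const continuousOn_id fun x hx => Or.inl ?_)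
        (hXc.mono fun x hx => ⟨le_trans ha hx.1.le, le_trans hx.2.le hbT⟩)
      exact ne_of_gt (lt_of_le_of_lt ha hx.1)
    · intro x hx
      have hx0 : 0 < x := lt_of_le_of_lt ha hx.1
      rw [abs_mul, abs_of_nonneg (Real.rpow_nonneg hx0.le α), mul_comm (x ^ α)]
      exact mul_le_mul_of_nonneg_right (hMX x ⟨hx0.le, le_trans hx.2.le hbT⟩)
        (Real.rpow_nonneg hx0.le α)
  -- bound on increments of Y
  have hYd : ∀ a b : ℝ, 0 ≤ a → a ≤ b → b ≤ T →
      |Y b - Y a| ≤ M0 / (α + 1) * (b ^ (α+1) - a ^ (α+1)) := by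
    intro a b ha hab hbT
    have hYab : Y b - Y a = ∫ s in a..b, s ^ α * X s := by
      rw [hY b ⟨le_trans ha hab, hbT⟩, hY a ⟨ha, le_trans hab hbT⟩]
      exact integral_interval_sub_left (hXI 0 b le_rfl (le_trans ha hab) hbT)
        (hXI 0 a le_rfl ha (le_trans hab hbT))
    rw [hYab]
    have h1 : |∫ s in a..b, s ^ α * X s| ≤ ∫ s in a..b, |s ^ α * X s| :=
      abs_integral_le_integral_abs hab
    have h2 : (∫ s in a..b, |s ^ α * X s|) ≤ ∫ s in a..b, M0 * s ^ α := by
      refine integral_mono_on hab ((hXI a b ha hab hbT).abs)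
        ((intervalIntegrable_rpow' (a := a) (b := b) hα1).const_mul M0) ?_
      · intro x hx
        rw [abs_mul, abs_of_nonneg (Real.rpow_nonneg (le_trans ha hx.1) α), mul_comm]
        exact mul_le_mul_of_nonneg_right (hMX x ⟨le_trans ha hx.1, le_trans hx.2 hbT⟩)
          (Real.rpow_nonneg (le_trans ha hx.1) α)
    have h3 : (∫ s in a..b, M0 * s ^ α) = M0 / (α + 1) * (b ^ (α+1) - a ^ (α+1)) := by
      rw [intervalIntegral.integral_const_mul, integral_rpow (Or.inl hα1)]
      ring
    linarith
  -- refined increment bound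
  have hYd' : ∀ r ∈ Set.Icc (0:ℝ) t, |Y t - Y r| ≤ M0 / (α + 1) * (t - r) ^ (α+1) := by
    intro r hr
    refine le_trans (hYd r t hr.1 hr.2 htT) ?_
    refine mul_le_mul_of_nonneg_left ?_ (by positivity)
    exact rpow_sub_le_sub_rpow hr.1 hr.2 hp0.le (by rw [hα]; linarith)
  -- derivative of Y
  have hYderiv : ∀ r ∈ Set.Ioo (0:ℝ) t, HasDerivAt Y (r ^ α * X r) r := by
    intro r hr
    have hrT : r < T := lt_of_lt_of_le hr.2 htT
    have hmem : Set.Ioo (0:ℝ) T ∈ 𝓝 r := Ioo_mem_nhds hr.1 hrT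
    have hcont : ContinuousAt (fun s => s ^ α * X s) r :=
      ContinuousAt.mul (Real.continuousAt_rpow_const r α (Or.inl hr.1.ne'))
        (hXc.continuousAt (Icc_mem_nhds hr.1 hrT))
    have hmeas : StronglyMeasurableAtFilter (fun s => s ^ α * X s) (𝓝 r) :=
      ⟨Set.Ioo 0 T, hmem, (ContinuousOn.mul (ContinuousOn.rpow_const continuousOn_id
        fun x hx => Or.inl (ne_of_gt hx.1))
        (hXc.mono Set.Ioo_subset_Icc_self)).aestronglyMeasurable measurableSet_Ioo⟩
    have hG := integral_hasDerivAt_right (hXI 0 r le_rfl hr.1.le hrT.le) hmeas hcont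
    refine hG.congr_of_eventuallyEq ?_
    filter_upwards [hmem] with u hu
    exact hY u ⟨hu.1.le, hu.2.le⟩
  -- the function F and its derivative
  set F : ℝ → ℝ := fun r => c * ((t - r) ^ α * (Y t - Y r)) with hF
  set f' : ℝ → ℝ := fun r =>
    (t - r) ^ (α-1) * (Y t - Y r) - c * ((t - r) ^ α * (r ^ α * X r)) with hf'
  have hFderiv : ∀ r ∈ Set.Ioo (0:ℝ) t, HasDerivAt F (f' r) r := by
    intro r hr
    have htr : (0:ℝ) < t - r := sub_pos.2 hr.2
    have h1 := ((hasDerivAt_id r).const_sub t).rpow_const (p := α) (Or.inl (ne_of_gt htr))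
    have h2 := (hYderiv r hr).const_sub (Y t)
    have h3 := (h1.mul h2).const_mul c
    refine h3.congr_deriv (Eq.symm ?_)
    simp only [hf', id_eq]
    linear_combination (-((t - r) ^ (α-1) * (Y t - Y r))) * hcm +
      ((t - r) ^ (α-1) * (Y t - Y r) * c) * hα
  -- integrability of shifted kernels
  have hIcomp : ∀ q : ℝ, -1 < q → IntervalIntegrable (fun r => (t - r) ^ q) volume 0 t := by
    intro q hq
    have h := (intervalIntegrable_rpow' (a := (0:ℝ)) (b := t) hq).comp_sub_left t
    simpa using h.symm
  -- kernel product bound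
  have hker : ∀ r ∈ Set.Ioo (0:ℝ) t, (t - r) ^ α * r ^ α ≤ (t/2) ^ α * ((t - r) ^ α + r ^ α) := by
    intro r hr
    have h2 : (0:ℝ) < t/2 := by linarith
    rcases le_total r (t/2) with h | h
    · have h1 : (t - r) ^ α ≤ (t/2) ^ α :=
        Real.rpow_le_rpow_of_nonpos h2 (by linarith) hα0.le
      calc (t - r) ^ α * r ^ α ≤ (t/2) ^ α * r ^ α :=
            mul_le_mul_of_nonneg_right h1 (Real.rpow_nonneg hr.1.le α)
        _ ≤ (t/2) ^ α * ((t - r) ^ α + r ^ α) := by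
            refine mul_le_mul_of_nonneg_left ?_ (Real.rpow_nonneg h2.le α)
            linarith [Real.rpow_nonneg (sub_nonneg.2 hr.2.le) α]
    · have h1 : r ^ α ≤ (t/2) ^ α :=
        Real.rpow_le_rpow_of_nonpos h2 h hα0.le
      calc (t - r) ^ α * r ^ α ≤ (t - r) ^ α * (t/2) ^ α :=
            mul_le_mul_of_nonneg_left h1 (Real.rpow_nonneg (sub_nonneg.2 hr.2.le) α)
        _ ≤ (t/2) ^ α * ((t - r) ^ α + r ^ α) := by
            rw [mul_comm]
            refine mul_le_mul_of_nonneg_left ?_ (Real.rpow_nonneg h2.le α)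
            linarith [Real.rpow_nonneg hr.1.le α]
  have hIg1 : IntervalIntegrable (fun r => (t - r) ^ α * (r ^ α * X r)) volume 0 t := by
    refine ii_of_bound ht0.le ?_
      ((((hIcomp α hα1).add (intervalIntegrable_rpow' hα1)).const_mul
        ((t/2) ^ α)).const_mul M0) ?_
    · refine ContinuousOn.mul (ContinuousOn.rpow_const
        (continuousOn_const.sub continuousOn_id)
        fun x hx => Or.inl (ne_of_gt (sub_pos.2 hx.2))) ?_
      refine ContinuousOn.mul (ContinuousOn.rpow_const continuousOn_id
        fun x hx => Or.inl (ne_of_gt hx.1)) ?_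
      exact hXc.mono fun x hx => ⟨hx.1.le, le_trans hx.2.le htT⟩
    · intro x hx
      have h1 : |(t - x) ^ α * (x ^ α * X x)| = (t - x) ^ α * x ^ α * |X x| := by
        rw [abs_mul, abs_mul, abs_of_nonneg (Real.rpow_nonneg (sub_nonneg.2 hx.2.le) α),
          abs_of_nonneg (Real.rpow_nonneg hx.1.le α), mul_assoc]
      rw [h1]
      calc (t - x) ^ α * x ^ α * |X x| ≤ (t - x) ^ α * x ^ α * M0 := by
            exact mul_le_mul_of_nonneg_left (hMX x ⟨hx.1.le, le_trans hx.2.le htT⟩)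
              (mul_nonneg (Real.rpow_nonneg (sub_nonneg.2 hx.2.le) α)
                (Real.rpow_nonneg hx.1.le α))
        _ ≤ (t/2) ^ α * ((t - x) ^ α + x ^ α) * M0 :=
            mul_le_mul_of_nonneg_right (hker x hx) hM0n
        _ = M0 * ((t/2) ^ α * ((t - x) ^ α + x ^ α)) := by ring
  have hIg2 : IntervalIntegrable (fun r => (t - r) ^ (α-1) * (Y t - Y r)) volume 0 t := by
    refine ii_of_bound ht0.le ?_ ((hIcomp (2*α) (by rw [hα]; linarith)).const_mul (M0/(α+1))) ?_
    · refine ContinuousOn.mul (ContinuousOn.rpow_const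
        (continuousOn_const.sub continuousOn_id)
        fun x hx => Or.inl (ne_of_gt (sub_pos.2 hx.2))) ?_
      exact continuousOn_const.sub
        (fun r hr => (hYderiv r hr).continuousAt.continuousWithinAt)
    · intro x hx
      have htx : (0:ℝ) < t - x := sub_pos.2 hx.2
      rw [abs_mul, abs_of_nonneg (Real.rpow_nonneg htx.le _)]
      calc (t - x) ^ (α-1) * |Y t - Y x|
          ≤ (t - x) ^ (α-1) * (M0/(α+1) * (t - x) ^ (α+1)) :=
            mul_le_mul_of_nonneg_left (hYd' x ⟨hx.1.le, hx.2.le⟩)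
              (Real.rpow_nonneg htx.le _)
        _ = M0/(α+1) * (t - x) ^ (2*α) := by
            rw [show (2*α : ℝ) = (α-1) + (α+1) by ring, Real.rpow_add htx (α-1) (α+1)]
            ring
  have hIf' : IntervalIntegrable f' volume 0 t := by
    rw [hf']
    exact hIg2.sub (hIg1.const_mul c)
  -- limits of F at the endpoints
  have hY0 : Y 0 = 0 := by rw [hY 0 ⟨le_rfl, hT.le⟩, intervalIntegral.integral_same]
  have hYten : Tendsto Y (𝓝[>] (0:ℝ)) (𝓝 0) := by
    refine squeeze_zero_norm' (a := fun r => M0/(α+1) * r ^ (α+1)) ?_ ?_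
    · filter_upwards [Ioo_mem_nhdsGT_of_mem (Set.mem_Ico.2 ⟨le_rfl, ht0⟩)] with r hr
      have h := hYd 0 r le_rfl hr.1.le (le_trans hr.2.le htT)
      simpa [hY0, Real.norm_eq_abs, Real.zero_rpow (ne_of_gt hp0)] using h
    · have h1 : Tendsto (fun r : ℝ => r ^ (α+1)) (𝓝 0) (𝓝 (0:ℝ)) := by
        simpa [Real.zero_rpow (ne_of_gt hp0)] using
          (Real.continuousAt_rpow_const 0 (α+1) (Or.inr hp0.le)).tendsto
      simpa using ((h1.const_mul (M0/(α+1))).mono_left nhdsWithin_le_nhds)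
  have hla : Tendsto F (𝓝[>] (0:ℝ)) (𝓝 (c * (t ^ α * Y t))) := by
    have h1 : Tendsto (fun r : ℝ => (t - r) ^ α) (𝓝 0) (𝓝 (t ^ α)) := by
      have hc1 : ContinuousAt (fun r : ℝ => (t - r) ^ α) 0 :=
        ContinuousAt.rpow_const ((continuous_const.sub continuous_id).continuousAt)
          (Or.inl (by simpa using ht0.ne'))
      simpa using hc1.tendsto
    have h := (((h1.mono_left nhdsWithin_le_nhds)).mul
      (hYten.const_sub (Y t))).const_mul c
    rw [hF]
    simpa using h
  have h2α1 : (0:ℝ) < 2*α + 1 := by rw [hα]; linarith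
  have hlb : Tendsto F (𝓝[<] t) (𝓝 0) := by
    refine squeeze_zero_norm' (a := fun r => |c| * (M0/(α+1)) * (t - r) ^ (2*α+1)) ?_ ?_
    · filter_upwards [Ioo_mem_nhdsLT_of_mem (Set.mem_Ioc.2 ⟨ht0, le_rfl⟩)] with r hr
      have htr : (0:ℝ) < t - r := sub_pos.2 hr.2
      have hb := hYd' r ⟨hr.1.le, hr.2.le⟩
      have he : ‖F r‖ = |c| * ((t - r) ^ α * |Y t - Y r|) := by
        rw [hF]
        simp [Real.norm_eq_abs, abs_mul, abs_of_nonneg (Real.rpow_nonneg htr.le α)]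
      rw [he]
      calc |c| * ((t - r) ^ α * |Y t - Y r|)
          ≤ |c| * ((t - r) ^ α * (M0/(α+1) * (t - r) ^ (α+1))) := by
            refine mul_le_mul_of_nonneg_left ?_ (abs_nonneg c)
            exact mul_le_mul_of_nonneg_left hb (Real.rpow_nonneg htr.le α)
        _ = |c| * (M0/(α+1)) * (t - r) ^ (2*α+1) := by
            rw [show (2*α+1 : ℝ) = α + (α+1) by ring, Real.rpow_add htr α (α+1)]
            ring
    · have hbase : Tendsto (fun r : ℝ => t - r) (𝓝[<] t) (𝓝 0) := by
        have h : Tendsto (fun r : ℝ => t - r) (𝓝 t) (𝓝 (t - t)) := by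
          exact Filter.Tendsto.const_sub t (f := fun r : ℝ => r) tendsto_id
        rw [sub_self] at h
        exact h.mono_left nhdsWithin_le_nhds
      have hrp : Tendsto (fun y : ℝ => y ^ (2*α+1)) (𝓝 0) (𝓝 (0:ℝ)) := by
        simpa [Real.zero_rpow (ne_of_gt h2α1)] using
          (Real.continuousAt_rpow_const 0 (2*α+1) (Or.inr h2α1.le)).tendsto
      simpa using (hrp.comp hbase).const_mul (|c| * (M0/(α+1)))
  -- fundamental theorem of calculus
  have key := integral_eq_sub_of_hasDerivAt_of_tendsto ht0 hFderiv hIf' hla hlb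
  rw [hf'] at key
  rw [intervalIntegral.integral_sub hIg2 (hIg1.const_mul c),
    intervalIntegral.integral_const_mul] at key
  set I1 := ∫ r in (0:ℝ)..t, (t - r) ^ α * (r ^ α * X r) with hI1
  set I2 := ∫ r in (0:ℝ)..t, (t - r) ^ (α-1) * (Y t - Y r) with hI2
  have hL : (∫ s in (0:ℝ)..t, (t - s) ^ α * s ^ α * X s) = I1 := by
    rw [hI1]
    exact integral_congr fun s _ => mul_assoc _ _ _
  have hJ : (∫ s in (0:ℝ)..t, (Y t - Y (t - s)) * s ^ (-(1/2 : ℝ) - H)) = I2 := by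
    have he : (-(1/2 : ℝ) - H) = α - 1 := by rw [hα]; ring
    rw [he]
    calc (∫ s in (0:ℝ)..t, (Y t - Y (t - s)) * s ^ (α-1))
        = ∫ s in (0:ℝ)..t, (fun x => (Y t - Y x) * (t - x) ^ (α-1)) (t - s) := by
          refine integral_congr fun s _ => ?_
          simp [sub_sub_cancel]
      _ = ∫ x in (t - t)..(t - 0), (Y t - Y x) * (t - x) ^ (α-1) :=
          integral_comp_sub_left (fun x => (Y t - Y x) * (t - x) ^ (α-1)) t
      _ = I2 := by
          rw [sub_self, sub_zero, hI2]
          exact integral_congr fun x _ => mul_comm _ _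
  rw [hL, hJ]
  have key2 : (H - 1/2) * (I2 - c * I1) = (H - 1/2) * (0 - c * (t ^ α * Y t)) := by rw [key]
  rw [mul_sub, mul_sub, ← mul_assoc, hcm, one_mul, ← mul_assoc, hcm, one_mul, mul_zero] at key2
  linarith
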